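/- Let (X,d) be a metric space, let {K_i} be a collection of pairwise disjoint subsets of X, and for each i let A_i be a subset with K_i ⊆ A_i (the A_i also pairwise disjoint). Let d₁ denote the electric pseudometric on X obtained by electrocuting the collection {K_i}, and let d₂ denote the electric pseudometric on X obtained by electrocuting the collection {A_i}. Suppose there exists m ≥ 0 such that for every i, each point of A_i lies within d₁-distance m of K_i. Then the identity map of X is a quasi-isometry from (X, d₁) to (X, d₂); in fact d₂(x,y) ≤ d₁(x,y) and d₁(x,y) ≤ (2m+1)·d₂(x,y) for all x, y ∈ X. -/
import Mathlib


open Set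
open scoped Classical ENNReal

/-- `γ` is a geodesic segment from `x` to `y`, parametrized by arclength on `[0, dist x y]`. -/
def IsGeodesicSeg {X : Type} [MetricSpace X] (γ : ℝ → X) (x y : X) : Prop :=
  γ 0 = x ∧ γ (dist x y) = y ∧
    ∀ s ∈ Set.Icc (0 : ℝ) (dist x y), ∀ t ∈ Set.Icc (0 : ℝ) (dist x y),
      dist (γ s) (γ t) = |s - t|

/-- The image (underlying set) of a geodesic segment from `x` to `y`. -/
def geodImage {X : Type} [MetricSpace X] (γ : ℝ → X) (x y : X) : Set X :=
  γ '' Set.Icc (0 : ℝ) (dist x y)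

/-- A geodesic metric space: any two points are joined by a geodesic segment. -/
def GeodesicMS (X : Type) [MetricSpace X] : Prop :=
  ∀ x y : X, ∃ γ : ℝ → X, IsGeodesicSeg γ x y

/-- `X` is δ-hyperbolic: all geodesic triangles are δ-thin, i.e. each side lies in the
δ-neighborhood of the union of the other two sides. -/
def DeltaHyperbolic (X : Type) [MetricSpace X] (δ : ℝ) : Prop :=
  ∀ (x y z : X) (γ₁ γ₂ γ₃ : ℝ → X),
    IsGeodesicSeg γ₁ x y → IsGeodesicSeg γ₂ y z → IsGeodesicSeg γ₃ x z →
    ∀ p ∈ geodImage γ₃ x z, ∃ q ∈ geodImage γ₁ x y ∪ geodImage γ₂ y z, dist p q ≤ δ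

/-- A subset `Z` is C-quasiconvex: every geodesic segment joining two points of `Z` lies
in the C-neighborhood of `Z`. -/
def QuasiconvexSubset {X : Type} [MetricSpace X] (C : ℝ) (Z : Set X) : Prop :=
  ∀ x ∈ Z, ∀ y ∈ Z, ∀ γ : ℝ → X, IsGeodesicSeg γ x y →
    ∀ p ∈ geodImage γ x y, ∃ z ∈ Z, dist p z ≤ C

/-- A collection of subsets is D-separated: distinct members are at distance at least `D`. -/
def SeparatedColl {X : Type} [MetricSpace X] (D : ℝ) (𝓗 : Set (Set X)) : Prop :=
  ∀ H₁ ∈ 𝓗, ∀ H₂ ∈ 𝓗, H₁ ≠ H₂ → ∀ a ∈ H₁, ∀ b ∈ H₂, D ≤ dist a b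

/-- The cost of a single step of an electric chain: a step both of whose endpoints lie in a
common electrocuted set costs at most `1`; any other step costs the distance between its
endpoints. -/
noncomputable def elecStep {X : Type} [MetricSpace X] (𝓗 : Set (Set X)) (a b : X) : ℝ :=
  if ∃ H ∈ 𝓗, a ∈ H ∧ b ∈ H then min 1 (dist a b) else dist a b

/-- The electric (coned-off) pseudometric obtained by electrocuting the members of `𝓗`:
the infimum of total costs of finite chains from `x` to `y`. -/
noncomputable def elecDist {X : Type} [MetricSpace X] (𝓗 : Set (Set X)) (x y : X) : ℝ :=
  sInf { r : ℝ | ∃ (n : ℕ) (c : ℕ → X), c 0 = x ∧ c n = y ∧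
    r = ∑ i ∈ Finset.range n, elecStep 𝓗 (c i) (c (i + 1)) }

/-- `β`, parametrized on `[0,T]`, is a P-quasigeodesic for the electric pseudometric. -/
def ElecQuasigeodesic {X : Type} [MetricSpace X] (𝓗 : Set (Set X)) (P : ℝ)
    (β : ℝ → X) (T : ℝ) : Prop :=
  ∀ s ∈ Set.Icc (0 : ℝ) T, ∀ t ∈ Set.Icc (0 : ℝ) T,
    (1 / P) * |s - t| - P ≤ elecDist 𝓗 (β s) (β t) ∧
      elecDist 𝓗 (β s) (β t) ≤ P * |s - t| + P

/-- `β` does not backtrack: it never returns to a member of `𝓗` after leaving it. -/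
def NoBacktracking {X : Type} [MetricSpace X] (𝓗 : Set (Set X)) (β : ℝ → X) (T : ℝ) : Prop :=
  ∀ H ∈ 𝓗, ∀ s t u : ℝ, 0 ≤ s → s ≤ t → t ≤ u → u ≤ T → β s ∈ H → β u ∈ H → β t ∈ H

section Aux

variable {X : Type} [MetricSpace X] (𝓗 : Set (Set X))

lemma elecStep_nonneg (a b : X) : 0 ≤ elecStep 𝓗 a b := by
  unfold elecStep
  split_ifs
  · exact le_min one_pos.le dist_nonneg
  · exact dist_nonneg

lemma elecStep_le_dist (a b : X) : elecStep 𝓗 a b ≤ dist a b := by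
  unfold elecStep
  split_ifs
  · exact min_le_right _ _
  · exact le_rfl

lemma elecStep_symm (a b : X) : elecStep 𝓗 a b = elecStep 𝓗 b a := by
  unfold elecStep
  have h : (∃ H ∈ 𝓗, a ∈ H ∧ b ∈ H) ↔ ∃ H ∈ 𝓗, b ∈ H ∧ a ∈ H := by
    constructor <;> rintro ⟨H, hH, h1, h2⟩ <;> exact ⟨H, hH, h2, h1⟩
  rw [h, dist_comm a b]

lemma elecSet_bddBelow (x y : X) :
    BddBelow { r : ℝ | ∃ (n : ℕ) (c : ℕ → X), c 0 = x ∧ c n = y ∧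
      r = ∑ i ∈ Finset.range n, elecStep 𝓗 (c i) (c (i + 1)) } := by
  refine ⟨0, ?_⟩
  rintro r ⟨n, c, -, -, rfl⟩
  exact Finset.sum_nonneg fun i _ => elecStep_nonneg 𝓗 _ _

lemma elecSet_nonempty (x y : X) :
    Set.Nonempty { r : ℝ | ∃ (n : ℕ) (c : ℕ → X), c 0 = x ∧ c n = y ∧
      r = ∑ i ∈ Finset.range n, elecStep 𝓗 (c i) (c (i + 1)) } := by
  refine ⟨elecStep 𝓗 x y, 1, fun i => if i = 0 then x else y, by simp, by simp, ?_⟩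
  simp [Finset.sum_range_one]

lemma elecDist_le_cost {x y : X} (n : ℕ) (c : ℕ → X) (h0 : c 0 = x) (hn : c n = y) :
    elecDist 𝓗 x y ≤ ∑ i ∈ Finset.range n, elecStep 𝓗 (c i) (c (i + 1)) :=
  csInf_le (elecSet_bddBelow 𝓗 x y) ⟨n, c, h0, hn, rfl⟩

lemma le_elecDist {a : ℝ} {x y : X}
    (h : ∀ (n : ℕ) (c : ℕ → X), c 0 = x → c n = y →
      a ≤ ∑ i ∈ Finset.range n, elecStep 𝓗 (c i) (c (i + 1))) :
    a ≤ elecDist 𝓗 x y := by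
  refine le_csInf (elecSet_nonempty 𝓗 x y) ?_
  rintro r ⟨n, c, h0, hn, rfl⟩
  exact h n c h0 hn

lemma elecDist_nonneg (x y : X) : 0 ≤ elecDist 𝓗 x y :=
  le_elecDist 𝓗 fun n c _ _ => Finset.sum_nonneg fun i _ => elecStep_nonneg 𝓗 _ _

lemma elecDist_le_step (x y : X) : elecDist 𝓗 x y ≤ elecStep 𝓗 x y := by
  have := elecDist_le_cost 𝓗 (x := x) (y := y) 1 (fun i => if i = 0 then x else y)
    (by simp) (by simp)
  simpa [Finset.sum_range_one] using this

lemma elecDist_le_dist (x y : X) : elecDist 𝓗 x y ≤ dist x y :=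
  (elecDist_le_step 𝓗 x y).trans (elecStep_le_dist 𝓗 x y)

lemma elecDist_self_nonpos (x : X) : elecDist 𝓗 x x ≤ 0 := by
  have := elecDist_le_cost 𝓗 (x := x) (y := x) 0 (fun _ => x) rfl rfl
  simpa using this

lemma elecDist_triangle (x y z : X) :
    elecDist 𝓗 x z ≤ elecDist 𝓗 x y + elecDist 𝓗 y z := by
  have key : ∀ r₁ ∈ { r : ℝ | ∃ (n : ℕ) (c : ℕ → X), c 0 = x ∧ c n = y ∧
      r = ∑ i ∈ Finset.range n, elecStep 𝓗 (c i) (c (i + 1)) },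
      ∀ r₂ ∈ { r : ℝ | ∃ (n : ℕ) (c : ℕ → X), c 0 = y ∧ c n = z ∧
      r = ∑ i ∈ Finset.range n, elecStep 𝓗 (c i) (c (i + 1)) },
      elecDist 𝓗 x z ≤ r₁ + r₂ := by
    rintro r₁ ⟨n, c, h0, hn, rfl⟩ r₂ ⟨n', c', h0', hn', rfl⟩
    set d : ℕ → X := fun i => if i < n then c i else c' (i - n) with hd
    have hd0 : d 0 = x := by
      by_cases h : 0 < n
      · simp [hd, h, h0]
      · have hn0 : n = 0 := by omega
        simp [hd, hn0, h0', ← h0, hn0 ▸ hn]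
    have hdend : d (n + n') = z := by
      simp [hd, Nat.add_sub_cancel_left, hn']
    have hsum : ∑ i ∈ Finset.range (n + n'), elecStep 𝓗 (d i) (d (i + 1)) =
        (∑ i ∈ Finset.range n, elecStep 𝓗 (c i) (c (i + 1))) +
          ∑ i ∈ Finset.range n', elecStep 𝓗 (c' i) (c' (i + 1)) := by
      rw [Finset.sum_range_add]
      congr 1
      · refine Finset.sum_congr rfl fun i hi => ?_
        have hi' : i < n := Finset.mem_range.1 hi
        have h1 : d i = c i := by simp [hd, hi']
        have h2 : d (i + 1) = c (i + 1) := by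
          by_cases h : i + 1 < n
          · simp [hd, h]
          · have : i + 1 = n := by omega
            simp [hd, h, this, h0', ← hn, this]
        rw [h1, h2]
      · refine Finset.sum_congr rfl fun i hi => ?_
        have h1 : d (n + i) = c' i := by
          have : ¬ n + i < n := by omega
          simp [hd, this]
        have h2 : d (n + i + 1) = c' (i + 1) := by
          have h3 : ¬ n + i + 1 < n := by omega
          have h4 : n + i + 1 - n = i + 1 := by omega
          simp [hd, h3, h4]
        rw [h1, h2]
    calc elecDist 𝓗 x z ≤ ∑ i ∈ Finset.range (n + n'), elecStep 𝓗 (d i) (d (i + 1)) :=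
          elecDist_le_cost 𝓗 _ d hd0 hdend
      _ = _ := hsum
  have h1 : elecDist 𝓗 x z - elecDist 𝓗 y z ≤ elecDist 𝓗 x y := by
    refine le_csInf (elecSet_nonempty 𝓗 x y) fun r₁ hr₁ => ?_
    have h2 : elecDist 𝓗 x z - r₁ ≤ elecDist 𝓗 y z := by
      refine le_csInf (elecSet_nonempty 𝓗 y z) fun r₂ hr₂ => ?_
      linarith [key r₁ hr₁ r₂ hr₂]
    linarith
  linarith

lemma elecDist_symm (x y : X) : elecDist 𝓗 x y = elecDist 𝓗 y x := by
  have key : ∀ x y : X, elecDist 𝓗 x y ≤ elecDist 𝓗 y x := by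
    intro x y
    refine le_csInf (elecSet_nonempty 𝓗 y x) ?_
    rintro r ⟨n, c, h0, hn, rfl⟩
    have hle := elecDist_le_cost 𝓗 (x := x) (y := y) n (fun i => c (n - i))
      (by simpa using hn) (by simpa using h0)
    refine hle.trans (le_of_eq ?_)
    calc ∑ i ∈ Finset.range n, elecStep 𝓗 (c (n - i)) (c (n - (i + 1)))
        = ∑ i ∈ Finset.range n, (fun j => elecStep 𝓗 (c j) (c (j + 1))) (n - 1 - i) := by
          refine Finset.sum_congr rfl fun i hi => ?_
          have hi' : i < n := Finset.mem_range.1 hi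
          have e1 : n - 1 - i = n - (i + 1) := by omega
          have e2 : n - (i + 1) + 1 = n - i := by omega
          simp only [e1, e2]
          exact elecStep_symm 𝓗 _ _
      _ = _ := by
          simpa using Finset.sum_range_reflect (fun j => elecStep 𝓗 (c j) (c (j + 1))) n
  exact le_antisymm (key x y) (key y x)

lemma elecDist_le_sum_chain (n : ℕ) (c : ℕ → X) :
    elecDist 𝓗 (c 0) (c n) ≤ ∑ i ∈ Finset.range n, elecDist 𝓗 (c i) (c (i + 1)) := by
  induction n with
  | zero => simpa using elecDist_self_nonpos 𝓗 (c 0)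
  | succ n ih =>
      rw [Finset.sum_range_succ]
      calc elecDist 𝓗 (c 0) (c (n + 1))
          ≤ elecDist 𝓗 (c 0) (c n) + elecDist 𝓗 (c n) (c (n + 1)) :=
            elecDist_triangle 𝓗 _ _ _
        _ ≤ _ := by linarith [ih]

end Aux

/-- Let `{K i}` be a pairwise disjoint collection of subsets of a metric
space `X` and `{A i}` a pairwise disjoint collection with `K i ⊆ A i`. Let `d₁` be the
electric pseudometric electrocuting the `K i` and `d₂` the one electrocuting the `A i`.
If there exists `m ≥ 0` such that every point of `A i` lies within `d₁`-distance `m` of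
`K i`, then the identity is a quasi-isometry from `(X,d₁)` to `(X,d₂)`; in fact
`d₂(x,y) ≤ d₁(x,y)` and `d₁(x,y) ≤ (2m+1)·d₂(x,y)` for all `x, y`. -/
theorem electrocution_comparison (X : Type) [MetricSpace X] (ι : Type)
    (K A : ι → Set X) (m : ℝ) (hm : 0 ≤ m)
    (hKdisj : ∀ i j, i ≠ j → Disjoint (K i) (K j))
    (hAdisj : ∀ i j, i ≠ j → Disjoint (A i) (A j))
    (hKA : ∀ i, K i ⊆ A i)
    (hclose : ∀ i, ∀ a ∈ A i, ∃ k ∈ K i, elecDist (Set.range K) a k ≤ m) :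
    ∀ x y : X,
      elecDist (Set.range A) x y ≤ elecDist (Set.range K) x y ∧
        elecDist (Set.range K) x y ≤ (2 * m + 1) * elecDist (Set.range A) x y := by
  have hstep_mono : ∀ a b : X, elecStep (Set.range A) a b ≤ elecStep (Set.range K) a b := by
    intro a b
    unfold elecStep
    split_ifs with h1 h2 h2
    · exact le_rfl
    · exact min_le_right _ _
    · exfalso
      obtain ⟨H, ⟨i, rfl⟩, ha, hb⟩ := h2
      exact h1 ⟨A i, ⟨i, rfl⟩, hKA i ha, hKA i hb⟩
    · exact le_rfl
  have hpos : (0 : ℝ) < 2 * m + 1 := by linarith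
  have hstep_bound : ∀ a b : X,
      elecDist (Set.range K) a b ≤ (2 * m + 1) * elecStep (Set.range A) a b := by
    intro a b
    by_cases h : ∃ H ∈ Set.range A, a ∈ H ∧ b ∈ H
    · rw [elecStep, if_pos h]
      obtain ⟨H, ⟨i, rfl⟩, ha, hb⟩ := h
      rcases le_total (dist a b) 1 with hd | hd
      · rw [min_eq_right hd]
        have h1 : elecDist (Set.range K) a b ≤ dist a b := elecDist_le_dist _ a b
        nlinarith [dist_nonneg (x := a) (y := b)]
      · rw [min_eq_left hd]
        obtain ⟨ka, hka, hma⟩ := hclose i a ha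
        obtain ⟨kb, hkb, hmb⟩ := hclose i b hb
        have h1 : elecDist (Set.range K) ka kb ≤ 1 := by
          refine (elecDist_le_step _ ka kb).trans ?_
          rw [elecStep, if_pos ⟨K i, ⟨i, rfl⟩, hka, hkb⟩]
          exact min_le_left _ _
        have tri1 := elecDist_triangle (Set.range K) a ka b
        have tri2 := elecDist_triangle (Set.range K) ka kb b
        have hsym : elecDist (Set.range K) kb b = elecDist (Set.range K) b kb :=
          elecDist_symm _ kb b
        linarith
    · rw [elecStep, if_neg h]
      have h1 := elecDist_le_dist (Set.range K) a b
      nlinarith [dist_nonneg (x := a) (y := b)]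
  intro x y
  constructor
  · refine le_csInf (elecSet_nonempty (Set.range K) x y) ?_
    rintro r ⟨n, c, h0, hn, rfl⟩
    calc elecDist (Set.range A) x y
        ≤ ∑ i ∈ Finset.range n, elecStep (Set.range A) (c i) (c (i + 1)) :=
          elecDist_le_cost _ n c h0 hn
      _ ≤ ∑ i ∈ Finset.range n, elecStep (Set.range K) (c i) (c (i + 1)) :=
          Finset.sum_le_sum fun i _ => hstep_mono _ _
  · have hdiv : elecDist (Set.range K) x y / (2 * m + 1) ≤ elecDist (Set.range A) x y := by
      refine le_csInf (elecSet_nonempty (Set.range A) x y) ?_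
      rintro r ⟨n, c, h0, hn, rfl⟩
      rw [div_le_iff₀ hpos]
      calc elecDist (Set.range K) x y = elecDist (Set.range K) (c 0) (c n) := by rw [h0, hn]
        _ ≤ ∑ i ∈ Finset.range n, elecDist (Set.range K) (c i) (c (i + 1)) :=
            elecDist_le_sum_chain _ n c
        _ ≤ ∑ i ∈ Finset.range n, (2 * m + 1) * elecStep (Set.range A) (c i) (c (i + 1)) :=
            Finset.sum_le_sum fun i _ => hstep_bound _ _
        _ = (∑ i ∈ Finset.range n, elecStep (Set.range A) (c i) (c (i + 1))) * (2 * m + 1) := by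
            rw [← Finset.mul_sum, mul_comm]
    calc elecDist (Set.range K) x y
        = elecDist (Set.range K) x y / (2 * m + 1) * (2 * m + 1) := by
          field_simp
      _ ≤ elecDist (Set.range A) x y * (2 * m + 1) := by
          exact mul_le_mul_of_nonneg_right hdiv hpos.le
      _ = (2 * m + 1) * elecDist (Set.range A) x y := mul_comm _ _
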